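/- arXiv:1409.4597 — 5 statements merged into one kernel-verified Lean document; each statement's English description precedes it below -/
import Mathlib

section
/- Let r > max(μ,0), M > 1, I > 0, let β₁ > 1 be the positive root of (1/2)σ²β(β-1) + μβ - r = 0, and set x^F = β₁(r-μ)I/(β₁-1). Define for x ∈ [0, x^F]: F(x) = (x/x^F)^{β₁}(x^F/(r-μ) - I) and L(x) = Mx/(r-μ) - I + (x/x^F)^{β₁}·x^F(1-M)/(r-μ). Then there exists a unique x^P ∈ (0, x^F) such that L(x) < F(x) for x ∈ [0, x^P), L(x^P) = F(x^P), and L(x) > F(x) for x ∈ (x^P, x^F). -/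
open Set Filter Topology

private lemma comb_aux {u v z : ℝ} (h1 : u < z) (h2 : z < v) :
    ∃ a b : ℝ, 0 < a ∧ 0 < b ∧ a + b = 1 ∧ a * u + b * v = z := by
  have huv : 0 < v - u := by linarith
  have h3 : 0 < v - z := by linarith
  have h4 : 0 < z - u := by linarith
  refine ⟨(v - z) / (v - u), (z - u) / (v - u), by positivity, by positivity, ?_, ?_⟩
  · rw [← add_div, div_eq_one_iff_eq (ne_of_gt huv)]
    ring
  · field_simp
    ring

set_option maxHeartbeats 1000000 in
/-- In the preemptive market entry model there is a unique preemption threshold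
`x^P ∈ (0, x^F)` at which the leader and follower values cross. -/
theorem exists_unique_preemption_threshold
    (r μ σ I M β₁ : ℝ) (hr : r > max μ 0) (hM : M > 1) (hI : I > 0)
    (hβ₁ : β₁ > 1) (hroot : (1/2) * σ^2 * β₁ * (β₁ - 1) + μ * β₁ - r = 0)
    (xF : ℝ) (hxF : xF = β₁ / (β₁ - 1) * ((r - μ) * I))
    (F L : ℝ → ℝ)
    (hF : ∀ x ∈ Set.Icc 0 xF, F x = (x / xF) ^ β₁ * (xF / (r - μ) - I))
    (hL : ∀ x ∈ Set.Icc 0 xF,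
      L x = M * x / (r - μ) - I + (x / xF) ^ β₁ * (xF * (1 - M) / (r - μ))) :
    ∃! xP, xP ∈ Set.Ioo 0 xF ∧
      (∀ x ∈ Set.Ico 0 xP, L x < F x) ∧
      L xP = F xP ∧
      (∀ x ∈ Set.Ioo xP xF, L x > F x) := by
  have hc : 0 < r - μ := by linarith [lt_of_le_of_lt (le_max_left μ 0) hr]
  have hb1 : 0 < β₁ - 1 := by linarith
  have hxFpos : 0 < xF := by rw [hxF]; positivity
  have hxFne : xF ≠ 0 := ne_of_gt hxFpos
  set A : ℝ := M * xF / (r - μ) - I with hA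
  have hApos : 0 < A := by
    rw [hA, hxF]
    have h1 : M * (β₁ / (β₁ - 1) * ((r - μ) * I)) / (r - μ) = M * β₁ * I / (β₁ - 1) := by
      field_simp
    rw [h1, sub_pos, lt_div_iff₀ hb1]
    nlinarith [mul_pos hI (show (0:ℝ) < (M - 1) * β₁ + 1 by nlinarith)]
  set G : ℝ → ℝ := fun x => M * x / (r - μ) - I - A * (x / xF) ^ β₁ with hG
  have hGeq : ∀ x ∈ Set.Icc 0 xF, L x - F x = G x := by
    intro x hx
    rw [hL x hx, hF x hx, hG]; simp only; rw [hA]; ring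
  have hG0 : G 0 = -I := by
    simp only [hG, zero_div, Real.zero_rpow (by positivity : β₁ ≠ 0)]
    ring
  have hGxF : G xF = 0 := by
    simp only [hG, div_self hxFne, Real.one_rpow, hA]; ring
  -- strict concavity of G on [0, xF]
  have hconv : StrictConvexOn ℝ (Ici 0) (fun x : ℝ => x ^ β₁) := strictConvexOn_rpow hβ₁
  have hconc : StrictConcaveOn ℝ (Set.Icc 0 xF) G := by
    refine ⟨convex_Icc 0 xF, ?_⟩
    intro x hx y hy hxy a b ha hb hab
    have hxd : x / xF ∈ Ici (0:ℝ) := div_nonneg hx.1 hxFpos.le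
    have hyd : y / xF ∈ Ici (0:ℝ) := div_nonneg hy.1 hxFpos.le
    have hne : x / xF ≠ y / xF := fun h => hxy (by field_simp at h; exact h)
    have key := hconv.2 hxd hyd hne ha hb hab
    simp only [smul_eq_mul] at key ⊢
    rw [show a * (x / xF) + b * (y / xF) = (a * x + b * y) / xF by ring] at key
    have h2 := mul_lt_mul_of_pos_left key hApos
    simp only [hG]
    have expand : a * (M * x / (r - μ) - I - A * (x / xF) ^ β₁)
        + b * (M * y / (r - μ) - I - A * (y / xF) ^ β₁)
        = M * (a * x + b * y) / (r - μ) - I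
          - A * (a * (x / xF) ^ β₁ + b * (y / xF) ^ β₁) := by
      linear_combination (-I) * hab
    rw [expand]
    linarith
  -- derivative at xF is negative, giving a point with G > 0 just left of xF
  have hd1 : HasDerivAt (fun x : ℝ => x / xF) (1 / xF) xF := (hasDerivAt_id xF).div_const xF
  have hd3 : HasDerivAt (fun x : ℝ => (x / xF) ^ β₁)
      (1 / xF * β₁ * (xF / xF) ^ (β₁ - 1)) xF :=
    hd1.rpow_const (Or.inr hβ₁.le)
  rw [div_self hxFne, Real.one_rpow] at hd3
  have hd4 : HasDerivAt G (M * 1 / (r - μ) - A * (1 / xF * β₁ * 1)) xF := by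
    rw [hG]
    exact ((((hasDerivAt_id xF).const_mul M).div_const (r - μ)).sub_const I).sub
      (hd3.const_mul A)
  have hdneg : M * 1 / (r - μ) - A * (1 / xF * β₁ * 1) < 0 := by
    have heq : M * 1 / (r - μ) - A * (1 / xF * β₁ * 1) = (1 - M) * (β₁ - 1) / (r - μ) := by
      rw [hA, hxF]; field_simp; ring
    rw [heq]
    apply div_neg_of_neg_of_pos _ hc
    nlinarith
  have hslope := hasDerivAt_iff_tendsto_slope.1 hd4
  have hev : ∀ᶠ x in 𝓝[<] xF, slope G xF x < 0 := by
    have h1 : 𝓝[<] xF ≤ 𝓝[≠] xF := nhdsWithin_mono _ (fun x hx => ne_of_lt hx)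
    exact h1 (hslope.eventually_lt_const hdneg)
  have hev2 : ∀ᶠ x in 𝓝[<] xF, x ∈ Ioo 0 xF := by
    filter_upwards [Ioo_mem_nhdsLT hxFpos] with x hx using hx
  obtain ⟨x0, hs, hx0⟩ := (hev.and hev2).exists
  have hGx0 : 0 < G x0 := by
    rw [slope_def_field, hGxF] at hs
    by_contra h
    push_neg at h
    have h2 : 0 ≤ -(G x0 - 0) / -(x0 - xF) :=
      div_nonneg (by linarith) (by linarith [hx0.2])
    rw [neg_div_neg_eq] at h2
    linarith
  -- IVT to find the crossing point
  have hcont : Continuous G := by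
    have h1 : Continuous fun y : ℝ => y ^ β₁ := Real.continuous_rpow_const (by linarith)
    rw [hG]
    exact (((continuous_const.mul continuous_id).div_const _).sub continuous_const).sub
      (continuous_const.mul (h1.comp (continuous_id.div_const xF)))
  have hivt := intermediate_value_Ioo (le_of_lt hx0.1) hcont.continuousOn
  obtain ⟨xP, hxPmem, hGxP⟩ := hivt ⟨by rw [hG0]; linarith, hGx0⟩
  have hxPIoo : xP ∈ Ioo 0 xF := ⟨hxPmem.1, hxPmem.2.trans hx0.2⟩
  have hxPIcc : xP ∈ Icc 0 xF := ⟨hxPIoo.1.le, hxPIoo.2.le⟩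
  -- sign of G on [0, xP)
  have hneg : ∀ x ∈ Ico 0 xP, G x < 0 := by
    intro x hx
    rcases eq_or_lt_of_le hx.1 with h0 | h0
    · rw [← h0, hG0]; linarith
    · obtain ⟨a, b, ha, hb, hab, hcomb⟩ := comb_aux hx.2 hxPIoo.2
      have hxIcc : x ∈ Icc 0 xF := ⟨h0.le, by linarith [hx.2, hxPIoo.2]⟩
      have key := hconc.2 hxIcc (⟨hxFpos.le, le_refl xF⟩ : xF ∈ Icc 0 xF)
        (by intro h; rw [h] at hx; linarith [hx.2, hxPIoo.2]) ha hb hab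
      simp only [smul_eq_mul] at key
      rw [hcomb, hGxF, hGxP] at key
      nlinarith
  -- sign of G on (xP, xF)
  have hpos : ∀ x ∈ Ioo xP xF, 0 < G x := by
    intro x hx
    obtain ⟨a, b, ha, hb, hab, hcomb⟩ := comb_aux hx.1 hx.2
    have key := hconc.2 hxPIcc (⟨hxFpos.le, le_refl xF⟩ : xF ∈ Icc 0 xF)
      (ne_of_lt (hx.1.trans hx.2)) ha hb hab
    simp only [smul_eq_mul] at key
    rw [hcomb, hGxF, hGxP] at key
    nlinarith
  refine ⟨xP, ⟨hxPIoo, ?_, ?_, ?_⟩, ?_⟩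
  · intro x hx
    have hxIcc : x ∈ Icc 0 xF := ⟨hx.1, by linarith [hx.2, hxPIoo.2]⟩
    have := hGeq x hxIcc
    linarith [hneg x hx]
  · have := hGeq xP hxPIcc
    linarith
  · intro x hx
    have hxIcc : x ∈ Icc 0 xF := ⟨by linarith [hx.1, hxPIoo.1], hx.2.le⟩
    have := hGeq x hxIcc
    have := hpos x hx
    simp only [gt_iff_lt]
    linarith
  · rintro y ⟨hyIoo, hylt, hyeq, hygt⟩
    rcases lt_trichotomy y xP with h | h | h
    · have : L y < F y := by
        have hyIcc : y ∈ Icc 0 xF := ⟨hyIoo.1.le, hyIoo.2.le⟩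
        have := hGeq y hyIcc
        linarith [hneg y ⟨hyIoo.1.le, h⟩]
      exact absurd hyeq (ne_of_lt this)
    · exact h
    · have hLF : L xP < F xP := hylt xP ⟨hxPIoo.1.le, h⟩
      have : L xP = F xP := by
        have := hGeq xP hxPIcc
        linarith
      linarith
end

section
/- With the notation of the preemptive market entry model (F, L, M as functions of the state x on [0,x^F], with M(x) = x/(r-μ) - I, and L, F as above), we have lim_{x↗x^F} (L(x) - F(x))/(L(x) - M(x)) = 1. -/
open Set Filter Real

/-- As `x ↗ x^F`, the ratio `(L(x) - F(x)) / (L(x) - M(x))` tends to `1`. -/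
theorem tendsto_ratio_one_at_xF
    (r μ σ I M : ℝ) (hr : r > max μ 0) (hM : M > 1) (hI : I > 0)
    (β₁ : ℝ) (hβ₁ : β₁ > 1) (hroot : (1/2) * σ^2 * β₁ * (β₁ - 1) + μ * β₁ - r = 0)
    (xF : ℝ) (hxF : xF = β₁ / (β₁ - 1) * ((r - μ) * I))
    (F L MM : ℝ → ℝ)
    (hF : ∀ x ∈ Set.Icc 0 xF, F x = (x / xF) ^ β₁ * (xF / (r - μ) - I))
    (hL : ∀ x ∈ Set.Icc 0 xF,
      L x = M * x / (r - μ) - I + (x / xF) ^ β₁ * (xF * (1 - M) / (r - μ)))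
    (hMM : ∀ x ∈ Set.Icc 0 xF, MM x = x / (r - μ) - I) :
    Filter.Tendsto (fun x => (L x - F x) / (L x - MM x))
      (nhdsWithin xF (Set.Iio xF)) (nhds 1) := by
  have hc : (0:ℝ) < r - μ := by
    have := lt_of_le_of_lt (le_max_left μ 0) hr; linarith
  have hb1 : (0:ℝ) < β₁ - 1 := by linarith
  have hxFpos : 0 < xF := by
    rw [hxF]; positivity
  set c := r - μ with hcdef
  -- explicit numerator and denominator
  set K1 : ℝ := xF * (1 - M) / c with hK1
  set K2 : ℝ := xF / c - I with hK2
  set n : ℝ → ℝ := fun x => M * x / c - I + (x / xF) ^ β₁ * K1 - (x / xF) ^ β₁ * K2 with hn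
  set d : ℝ → ℝ := fun x => (M - 1) * x / c + (x / xF) ^ β₁ * K1 with hd
  set n' : ℝ → ℝ := fun x => M / c + β₁ * (x / xF) ^ (β₁ - 1) * (1 / xF) * (K1 - K2) with hn'
  set d' : ℝ → ℝ := fun x => (M - 1) / c + β₁ * (x / xF) ^ (β₁ - 1) * (1 / xF) * K1 with hd'
  have hIoo : Ioo (0:ℝ) xF ∈ nhdsWithin xF (Iio xF) :=
    Ioo_mem_nhdsLT_of_mem ⟨hxFpos, le_refl _⟩
  -- derivative of the power term
  have hpow : ∀ x ∈ Ioo (0:ℝ) xF,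
      HasDerivAt (fun y => (y / xF) ^ β₁) (β₁ * (x / xF) ^ (β₁ - 1) * (1 / xF)) x := by
    intro x hx
    have hx0 : x / xF ≠ 0 := by
      have := hx.1; positivity
    have h1 : HasDerivAt (fun y : ℝ => y / xF) (1 / xF) x := by
      simpa using (hasDerivAt_id x).div_const xF
    have h2 : HasDerivAt (fun y : ℝ => y ^ β₁) (β₁ * (x / xF) ^ (β₁ - 1)) (x / xF) :=
      Real.hasDerivAt_rpow_const (Or.inl hx0)
    exact h2.comp x h1
  have hnderiv : ∀ x ∈ Ioo (0:ℝ) xF, HasDerivAt n (n' x) x := by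
    intro x hx
    have hp := hpow x hx
    have h1 : HasDerivAt (fun y => M * y / c) (M / c) x := by
      have : HasDerivAt (fun y : ℝ => M * y / c) (M * 1 / c) x :=
        (((hasDerivAt_id x).const_mul M).div_const c)
      simpa using this
    have := ((h1.sub_const I).add (hp.mul_const K1)).sub (hp.mul_const K2)
    refine HasDerivAt.congr_deriv this ?_
    simp only [hn']; ring
  have hdderiv : ∀ x ∈ Ioo (0:ℝ) xF, HasDerivAt d (d' x) x := by
    intro x hx
    have hp := hpow x hx
    have h1 : HasDerivAt (fun y => (M - 1) * y / c) ((M - 1) / c) x := by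
      have : HasDerivAt (fun y : ℝ => (M - 1) * y / c) ((M - 1) * 1 / c) x :=
        (((hasDerivAt_id x).const_mul (M - 1)).div_const c)
      simpa using this
    have := h1.add (hp.mul_const K1)
    exact this
  -- the common value of the derivatives at xF
  have hA : ((M - 1) * (1 - β₁) / c : ℝ) ≠ 0 := by
    have h1 : (M - 1) * (1 - β₁) < 0 := mul_neg_of_pos_of_neg (by linarith) (by linarith)
    exact ne_of_lt (div_neg_of_neg_of_pos h1 hc)
  -- continuity of the power with exponent β₁-1 at xF, tending to 1
  have hT : Filter.Tendsto (fun x => (x / xF) ^ (β₁ - 1)) (nhds xF) (nhds 1) := by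
    have hcont : ContinuousAt (fun x => (x / xF) ^ (β₁ - 1)) xF := by
      apply ContinuousAt.rpow_const (continuousAt_id.div_const xF)
      right; linarith
    have : (xF / xF) ^ (β₁ - 1) = 1 := by
      rw [div_self (ne_of_gt hxFpos), Real.one_rpow]
    simpa [ContinuousAt, this] using hcont
  have hTpow : Filter.Tendsto (fun x => (x / xF) ^ β₁) (nhds xF) (nhds 1) := by
    have hcont : ContinuousAt (fun x => (x / xF) ^ β₁) xF := by
      apply ContinuousAt.rpow_const (continuousAt_id.div_const xF)
      right; linarith
    have : (xF / xF) ^ β₁ = 1 := by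
      rw [div_self (ne_of_gt hxFpos), Real.one_rpow]
    simpa [ContinuousAt, this] using hcont
  have hT' : Filter.Tendsto (fun x => (x / xF) ^ (β₁ - 1)) (nhdsWithin xF (Iio xF)) (nhds 1) :=
    hT.mono_left nhdsWithin_le_nhds
  have hTpow' : Filter.Tendsto (fun x => (x / xF) ^ β₁) (nhdsWithin xF (Iio xF)) (nhds 1) :=
    hTpow.mono_left nhdsWithin_le_nhds
  -- limits of the derivatives
  have hn'lim : Filter.Tendsto n' (nhdsWithin xF (Iio xF)) (nhds ((M - 1) * (1 - β₁) / c)) := by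
    have h := (tendsto_const_nhds (x := M / c)).add
      (((hT'.const_mul β₁).mul_const (1 / xF)).mul_const (K1 - K2))
    have heq : M / c + β₁ * 1 * (1 / xF) * (K1 - K2) = (M - 1) * (1 - β₁) / c := by
      rw [hK1, hK2, hxF]
      field_simp
      ring
    rw [heq] at h
    exact h
  have hd'lim : Filter.Tendsto d' (nhdsWithin xF (Iio xF)) (nhds ((M - 1) * (1 - β₁) / c)) := by
    have h := (tendsto_const_nhds (x := (M - 1) / c)).add
      (((hT'.const_mul β₁).mul_const (1 / xF)).mul_const K1)
    have heq : (M - 1) / c + β₁ * 1 * (1 / xF) * K1 = (M - 1) * (1 - β₁) / c := by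
      rw [hK1]
      field_simp
      ring
    rw [heq] at h
    exact h
  -- ratio of derivatives tends to 1
  have hdiv : Filter.Tendsto (fun x => n' x / d' x) (nhdsWithin xF (Iio xF)) (nhds 1) := by
    have := hn'lim.div hd'lim hA
    rwa [div_self hA] at this
  -- n and d tend to 0
  have hn0 : Filter.Tendsto n (nhdsWithin xF (Iio xF)) (nhds 0) := by
    have hid : Filter.Tendsto (fun x:ℝ => x) (nhdsWithin xF (Iio xF)) (nhds xF) :=
      (continuous_id.tendsto xF).mono_left nhdsWithin_le_nhds
    have h := ((((hid.const_mul M).div_const c).sub_const I).add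
      (hTpow'.mul_const K1)).sub (hTpow'.mul_const K2)
    have heq : M * xF / c - I + 1 * K1 - 1 * K2 = 0 := by
      rw [hK1, hK2]; field_simp; ring
    rw [heq] at h
    exact h.congr (fun x => by simp [hn])
  have hd0 : Filter.Tendsto d (nhdsWithin xF (Iio xF)) (nhds 0) := by
    have hid : Filter.Tendsto (fun x:ℝ => x) (nhdsWithin xF (Iio xF)) (nhds xF) :=
      (continuous_id.tendsto xF).mono_left nhdsWithin_le_nhds
    have h := (((hid.const_mul (M - 1)).div_const c).add (hTpow'.mul_const K1))
    have heq : (M - 1) * xF / c + 1 * K1 = 0 := by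
      rw [hK1]; field_simp; ring
    rw [heq] at h
    exact h.congr (fun x => by simp [hd])
  -- eventual statements
  have hff' : ∀ᶠ x in nhdsWithin xF (Iio xF), HasDerivAt n (n' x) x :=
    Filter.eventually_of_mem hIoo hnderiv
  have hgg' : ∀ᶠ x in nhdsWithin xF (Iio xF), HasDerivAt d (d' x) x :=
    Filter.eventually_of_mem hIoo hdderiv
  have hg' : ∀ᶠ x in nhdsWithin xF (Iio xF), d' x ≠ 0 :=
    hd'lim.eventually_ne hA
  have hlhop := HasDerivAt.lhopital_zero_nhdsLT hff' hgg' hg' hn0 hd0 hdiv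
  -- finally, identify the original quotient with n/d near xF
  refine hlhop.congr' ?_
  filter_upwards [hIoo] with x hx
  have hxmem : x ∈ Icc (0:ℝ) xF := ⟨le_of_lt hx.1, le_of_lt hx.2⟩
  rw [hL x hxmem, hF x hxmem, hMM x hxmem]
  simp only [hn, hd, hK1, hK2]
  ring_nf
end

section
/- Let r, λ > 0, a = 2 + r/λ, b = r/(r+λ), and let T be an exponential random variable with rate λ generating the filtration 𝓕_t = σ(1_{s≤T} : s ≤ t). Define L²_t = e^{-rt} 1_{t<T} + (a - e^{-rt} b) 1_{t≥T}. Then L² is a strict submartingale: for all 0 ≤ s < t, E[L²_t | 𝓕_s] > L²_s almost surely. -/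
open MeasureTheory

/-- Key strict inequality for the submartingale property on `{s < T}`. -/
lemma L2_key_ineq (r lam s t a b : ℝ) (hr : 0 < r) (hlam : 0 < lam)
    (hs : 0 ≤ s) (hst : s < t) (ha : a = 2 + r / lam) (hb : b = r / (r + lam)) :
    Real.exp (-r * s) < Real.exp (-r * t) * Real.exp (-lam * (t - s)) +
      (a - Real.exp (-r * t) * b) * (1 - Real.exp (-lam * (t - s))) := by
  have hrl : 0 < r + lam := by linarith
  set q := Real.exp (-lam * (t - s)) with hqdef
  set E := Real.exp (-(r + lam) * (t - s)) with hEdef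
  set x := Real.exp (-r * t) with hxdef
  set y := Real.exp (-r * s) with hydef
  have hq0 : 0 < q := Real.exp_pos _
  have hq1 : q < 1 := by
    rw [hqdef]; apply Real.exp_lt_one_iff.mpr; nlinarith
  have hE1 : E ≤ 1 := by
    rw [hEdef]; apply Real.exp_le_one_iff.mpr; nlinarith
  have hy1 : y ≤ 1 := by
    rw [hydef]; apply Real.exp_le_one_iff.mpr; nlinarith
  have hx1 : x ≤ 1 := by
    rw [hxdef]; apply Real.exp_le_one_iff.mpr; nlinarith
  have hx0 : 0 < x := Real.exp_pos _
  have hb1 : b < 1 := by rw [hb]; rw [div_lt_one hrl]; linarith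
  have hb0 : 0 < b := by rw [hb]; positivity
  have hxb1 : x * b < 1 := by nlinarith
  have hxy : x * q = y * E := by
    rw [hxdef, hydef, hqdef, hEdef, ← Real.exp_add, ← Real.exp_add]; ring_nf
  -- convexity of exp
  have h0a : (0:ℝ) ≤ r / (r + lam) := by positivity
  have h0b : (0:ℝ) ≤ lam / (r + lam) := by positivity
  have hab : r / (r + lam) + lam / (r + lam) = 1 := by field_simp
  have hconv := convexOn_exp.2 (Set.mem_univ (0 : ℝ))
    (Set.mem_univ (-(r + lam) * (t - s))) h0a h0b hab
  simp only [smul_eq_mul, mul_zero, zero_add, Real.exp_zero, mul_one] at hconv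
  have harg : lam / (r + lam) * (-(r + lam) * (t - s)) = -lam * (t - s) := by
    field_simp
  rw [harg] at hconv
  -- hconv : q ≤ r/(r+lam) + lam/(r+lam) * E
  have hkey : lam * (1 - E) ≤ (r + lam) * (1 - q) := by
    have h5 : q * (r + lam) ≤ r + lam * E := by
      rw [← le_div_iff₀ hrl]
      calc q ≤ r / (r + lam) + lam / (r + lam) * Real.exp (-(r + lam) * (t - s)) := hconv
        _ = (r + lam * E) / (r + lam) := by rw [← hEdef]; field_simp
    nlinarith
  have step1 : y ≤ x * q + (1 - E) := by
    nlinarith [mul_nonneg (sub_nonneg.2 hy1) (sub_nonneg.2 hE1)]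
  have step2 : (1 - E) ≤ (1 + r / lam) * (1 - q) := by
    have hmul : lam * ((1 + r / lam) * (1 - q)) = (r + lam) * (1 - q) := by
      have hc : lam * (r / lam) = r := mul_div_cancel₀ r hlam.ne'
      linear_combination (1 - q) * hc
    refine le_of_mul_le_mul_left ?_ hlam
    rw [hmul]; exact hkey
  have step3 : (1 + r / lam) * (1 - q) < (a - x * b) * (1 - q) := by
    apply mul_lt_mul_of_pos_right _ (by linarith)
    rw [ha]; linarith
  linarith


/-- In the jump example, firm 2's leader payoff
`L²_t = e^{-rt} 1_{t<T} + (a - e^{-rt}b) 1_{t≥T}` (with `a = 2 + r/λ`,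
`b = r/(r+λ)`, `T` exponential with rate `λ` generating the filtration) is a
strict submartingale. -/
theorem L2_strict_submartingale
    {Ω : Type*} {m : MeasurableSpace Ω} (μ : MeasureTheory.Measure Ω)
    [MeasureTheory.IsProbabilityMeasure μ]
    (r lam : ℝ) (hr : 0 < r) (hlam : 0 < lam)
    (a b : ℝ) (ha : a = 2 + r / lam) (hb : b = r / (r + lam))
    (T : Ω → ℝ) (hT : Measurable T)
    (hTexp : ∀ z : ℝ, 0 ≤ z → μ {ω | T ω ≤ z} = ENNReal.ofReal (1 - Real.exp (-lam * z)))
    (u : ℝ → Ω → ℝ) (hu_def : ∀ s ω, u s ω = if T ω ≤ s then 1 else 0)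
    (hu : ∀ s, MeasureTheory.StronglyMeasurable (u s))
    (L2 : ℝ → Ω → ℝ)
    (hL2 : ∀ t ω, L2 t ω =
      if t < T ω then Real.exp (-r * t) else a - Real.exp (-r * t) * b) :
    ∀ s t : ℝ, 0 ≤ s → s < t →
      ∀ᵐ ω ∂μ, L2 s ω < (μ[L2 t | (MeasureTheory.Filtration.natural u hu) s]) ω := by
  
  intro s t hs hst
  have hFm : (MeasureTheory.Filtration.natural u hu) s ≤ m :=
    (MeasureTheory.Filtration.natural u hu).le s
  set A : ℝ → Set Ω := fun x => {ω | T ω ≤ x} with hAdef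
  have hA : ∀ x, MeasurableSet[m] (A x) := fun x => hT measurableSet_Iic
  -- step functions
  set step : ℝ → ℝ → ℝ → Ω → ℝ := fun x c d ω => if T ω ≤ x then c else d with hstepdef
  have hstep_eq : ∀ x c d, step x c d = fun ω =>
      (A x).indicator (fun _ => c) ω + (A x)ᶜ.indicator (fun _ => d) ω := by
    intro x c d; funext ω
    by_cases h : T ω ≤ x <;>
      simp [hstepdef, hAdef, h, Set.indicator_apply, Set.mem_setOf_eq]
  have hstep_int : ∀ x c d, Integrable (step x c d) μ := by
    intro x c d
    rw [hstep_eq]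
    exact ((integrable_const c).indicator (hA x)).add
      ((integrable_const d).indicator (hA x).compl)
  have hμA : ∀ x : ℝ, 0 ≤ x → (μ (A x)).toReal = 1 - Real.exp (-lam * x) := by
    intro x hx
    rw [hTexp x hx, ENNReal.toReal_ofReal]
    have : Real.exp (-lam * x) ≤ 1 := Real.exp_le_one_iff.mpr (by nlinarith)
    linarith
  have hμAc : ∀ x : ℝ, 0 ≤ x → (μ (A x)ᶜ).toReal = Real.exp (-lam * x) := by
    intro x hx
    have hle : Real.exp (-lam * x) ≤ 1 := Real.exp_le_one_iff.mpr (by nlinarith)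
    have h0 : 0 ≤ 1 - Real.exp (-lam * x) := by linarith
    have h1 : μ (A x)ᶜ = 1 - ENNReal.ofReal (1 - Real.exp (-lam * x)) := by
      rw [measure_compl (hA x) (measure_ne_top μ _), hTexp x hx, measure_univ]
    rw [h1, ENNReal.toReal_sub_of_le (ENNReal.ofReal_le_one.2
      (by linarith [Real.exp_pos (-lam * x)]))
      ENNReal.one_ne_top, ENNReal.toReal_ofReal h0, ENNReal.toReal_one]
    ring
  have hstep_integral : ∀ x c d, 0 ≤ x → ∫ ω, step x c d ω ∂μ =
      c * (1 - Real.exp (-lam * x)) + d * Real.exp (-lam * x) := by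
    intro x c d hx
    rw [hstep_eq]
    rw [integral_add ((integrable_const c).indicator (hA x))
      ((integrable_const d).indicator (hA x).compl),
      integral_indicator_const c (hA x), integral_indicator_const d (hA x).compl,
      measureReal_def, measureReal_def, hμA x hx, hμAc x hx]
    simp [mul_comm]
  -- A x ∈ F for x ≤ s
  have hAF : ∀ x, x ≤ s →
      MeasurableSet[(MeasureTheory.Filtration.natural u hu) s] (A x) := by
    intro x hx
    have h1 : MeasurableSpace.comap (u x) inferInstance ≤
        (MeasureTheory.Filtration.natural u hu) s :=
      le_biSup (fun j => MeasurableSpace.comap (u j) inferInstance) hx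
    have h2 : A x = u x ⁻¹' {1} := by
      ext ω
      by_cases h : T ω ≤ x <;> simp [hAdef, hu_def, h]
    rw [h2]
    exact h1 _ ⟨{1}, measurableSet_singleton 1, rfl⟩
  -- generating π-system
  set Cgen : Set (Set Ω) := {S | ∃ x ≤ s, A x = S} with hCdef
  have hpi : IsPiSystem Cgen := by
    rintro S1 ⟨x, hx, rfl⟩ S2 ⟨y, hy, rfl⟩ -
    exact ⟨min x y, le_trans (min_le_left x y) hx, by
      ext ω; simp [hAdef, le_min_iff]⟩
  have hFgen : (MeasureTheory.Filtration.natural u hu) s =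
      MeasurableSpace.generateFrom Cgen := by
    refine le_antisymm ?_ ?_
    · refine iSup₂_le fun j hj => ?_
      refine Measurable.comap_le ?_
      have hAg : MeasurableSet[MeasurableSpace.generateFrom Cgen] (A j) :=
        MeasurableSpace.measurableSet_generateFrom ⟨j, hj, rfl⟩
      have huj : u j = (A j).indicator (fun _ => (1 : ℝ)) := by
        funext ω; by_cases h : T ω ≤ j <;>
          simp [hu_def, hAdef, h, Set.indicator_apply, Set.mem_setOf_eq]
      rw [huj]
      exact measurable_const.indicator hAg
    · refine MeasurableSpace.generateFrom_le ?_
      rintro S ⟨x, hx, rfl⟩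
      exact hAF x hx
  -- the candidate conditional expectation
  set C : ℝ := a - Real.exp (-r * t) * b with hCvdef
  set Dv : ℝ := Real.exp (-r * t) * Real.exp (-lam * (t - s)) +
    C * (1 - Real.exp (-lam * (t - s))) with hDvdef
  set g : Ω → ℝ := step s C Dv with hgdef
  have hg_int : Integrable g μ := hstep_int s C Dv
  have hL2t_eq : L2 t = step t C (Real.exp (-r * t)) := by
    funext ω
    simp only [hL2 t ω, hstepdef]
    by_cases h : T ω ≤ t
    · rw [if_neg (not_lt.2 h), if_pos h]
    · rw [if_pos (lt_of_not_ge h), if_neg h]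
  have hL2t_int : Integrable (L2 t) μ := hL2t_eq ▸ hstep_int t C (Real.exp (-r * t))
  have ht0 : (0:ℝ) ≤ t := le_of_lt (lt_of_le_of_lt hs hst)
  -- total integrals agree
  have htotal : ∫ ω, g ω ∂μ = ∫ ω, L2 t ω ∂μ := by
    rw [hgdef, hL2t_eq, hstep_integral s C Dv hs,
      hstep_integral t C (Real.exp (-r * t)) ht0, hDvdef]
    have hq : Real.exp (-lam * s) * Real.exp (-lam * (t - s)) = Real.exp (-lam * t) := by
      rw [← Real.exp_add]; ring_nf
    linear_combination (Real.exp (-r * t) - C) * hq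
  -- set integrals agree on all of F
  have hset : ∀ S : Set Ω, MeasurableSet[(MeasureTheory.Filtration.natural u hu) s] S →
      ∫ ω in S, g ω ∂μ = ∫ ω in S, L2 t ω ∂μ := by
    have key := MeasurableSpace.induction_on_inter
      (m := (MeasureTheory.Filtration.natural u hu) s)
      (C := fun S _ => ∫ ω in S, g ω ∂μ = ∫ ω in S, L2 t ω ∂μ) hFgen hpi ?_ ?_ ?_ ?_
    · exact fun S hS => key S hS
    · simp
    · rintro S ⟨x, hx, rfl⟩
      refine setIntegral_congr_fun (hA x) fun ω hω => ?_
      have hωs : T ω ≤ s := le_trans hω hx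
      have hnt : ¬ t < T ω := not_lt.2 (le_trans hωs (le_of_lt hst))
      simp only [hgdef, hstepdef, hL2 t ω, if_neg hnt, if_pos hωs, hCvdef]
    · intro S hSF hS
      have hSm : MeasurableSet[m] S := hFm S hSF
      have h1 := integral_add_compl hSm hg_int
      have h2 := integral_add_compl hSm hL2t_int
      linarith
    · intro f hdisj hmeasF hCf
      rw [integral_iUnion (fun i => hFm _ (hmeasF i)) hdisj hg_int.integrableOn,
        integral_iUnion (fun i => hFm _ (hmeasF i)) hdisj hL2t_int.integrableOn]
      exact tsum_congr hCf
  -- g is F-measurable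
  have hgF : StronglyMeasurable[(MeasureTheory.Filtration.natural u hu) s] g := by
    have hmg : Measurable[(MeasureTheory.Filtration.natural u hu) s] g := by
      rw [hgdef, hstepdef]
      exact Measurable.ite (hAF s le_rfl) measurable_const measurable_const
    exact hmg.stronglyMeasurable
  have hcond : g =ᵐ[μ] μ[L2 t | (MeasureTheory.Filtration.natural u hu) s] := by
    refine ae_eq_condExp_of_forall_setIntegral_eq hFm hL2t_int
      (fun S _ _ => hg_int.integrableOn) (fun S hS _ => hset S hS) ?_
    exact ⟨g, hgF, Filter.EventuallyEq.rfl⟩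
  filter_upwards [hcond] with ω hω
  rw [← hω]
  -- pointwise strict inequality
  simp only [hgdef, hstepdef]
  by_cases h : T ω ≤ s
  · have hns : ¬ s < T ω := not_lt.2 h
    have hb0 : 0 < b := by rw [hb]; positivity
    have hlt : Real.exp (-r * t) < Real.exp (-r * s) :=
      Real.exp_lt_exp.2 (by nlinarith)
    simp only [hL2 s ω, if_neg hns, if_pos h, hCvdef]
    nlinarith
  · have hslt : s < T ω := lt_of_not_ge h
    simp only [hL2 s ω, if_pos hslt, if_neg h, hDvdef, hCvdef]
    exact L2_key_ineq r lam s t a b hr hlam hs hst ha hb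
end

section
/- Let r, λ > 0, a = 2 + r/λ, b = r/(r+λ), c ∈ [1, 1+b), and T exponential with rate λ. Define L¹_t = a - e^{-rt}b, L²_t = e^{-rt}1_{t<T} + (a - e^{-rt}b)1_{t≥T}, and F_t = e^{-rt}c. Then for any events A₁, A₂ (measurable with respect to 𝓕_T) with P[A₁ ∩ A₂] = 0 and A₂ ⊆ A₁ᶜ up to null sets, E[L¹_T 1_{A₁} + F_T 1_{A₁ᶜ}] + E[L²_T 1_{A₂} + F_T 1_{A₂ᶜ}] ≤ a - (b-c)·λ/(r+λ) < L¹_0 + L²_0 = a - b + 1. -/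
open MeasureTheory ProbabilityTheory Real Set

open MeasureTheory ProbabilityTheory Real Set

lemma exp_exp_integral {Ω : Type*} {m : MeasurableSpace Ω} (μ : Measure Ω)
    [IsProbabilityMeasure μ] (r lam : ℝ) (hr : 0 < r) (hlam : 0 < lam)
    (T : Ω → ℝ) (hT : Measurable T)
    (hTexp : ∀ z : ℝ, 0 ≤ z → μ {ω | T ω ≤ z} = ENNReal.ofReal (1 - Real.exp (-lam * z))) :
    ∫ ω, Real.exp (-r * T ω) ∂μ = lam / (r + lam) := by
  have hrl : (0:ℝ) < r + lam := by linarith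
  have hmap : μ.map T = expMeasure lam := by
    have : IsProbabilityMeasure (μ.map T) := Measure.isProbabilityMeasure_map hT.aemeasurable
    refine Measure.ext_of_Iic _ _ (fun x => ?_)
    rw [Measure.map_apply hT measurableSet_Iic]
    have hexp : expMeasure lam (Iic x)
        = ENNReal.ofReal (if 0 ≤ x then 1 - exp (-(lam * x)) else 0) := by
      rw [expMeasure, gammaMeasure, withDensity_apply _ measurableSet_Iic]
      exact lintegral_exponentialPDF_eq_antiDeriv hlam x
    rw [hexp]
    by_cases hx : 0 ≤ x
    · rw [if_pos hx, ← neg_mul, ← hTexp x hx]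
      rfl
    · rw [if_neg hx]
      have hsub : T ⁻¹' Iic x ⊆ {ω | T ω ≤ 0} := fun ω hω => le_trans hω (le_of_not_ge hx)
      have h0 : μ {ω | T ω ≤ 0} = 0 := by
        rw [hTexp 0 le_rfl]; simp
      simpa using le_antisymm (h0 ▸ measure_mono hsub) zero_le
  have hmeas : Measurable fun x : ℝ => Real.exp (-r * x) :=
    (measurable_const.mul measurable_id).exp
  rw [← integral_map hT.aemeasurable hmeas.aestronglyMeasurable, hmap]
  have hnn : 0 ≤ᵐ[expMeasure lam] fun x => Real.exp (-r * x) :=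
    Filter.Eventually.of_forall fun x => (exp_pos _).le
  rw [integral_eq_lintegral_of_nonneg_ae hnn hmeas.aestronglyMeasurable]
  have hpm : Measurable (gammaPDF 1 lam) := (measurable_gammaPDFReal 1 lam).ennreal_ofReal
  rw [expMeasure, gammaMeasure, lintegral_withDensity_eq_lintegral_mul _ hpm hmeas.ennreal_ofReal]
  have hg : ∀ x : ℝ, (gammaPDF 1 lam * fun x => ENNReal.ofReal (rexp (-r * x))) x
      = ENNReal.ofReal (Set.indicator (Ici (0:ℝ)) (fun x => lam * rexp (-((r + lam) * x))) x) := by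
    intro x
    show gammaPDF 1 lam x * ENNReal.ofReal (rexp (-r * x)) = _
    have h1 : gammaPDF 1 lam x = exponentialPDF lam x := rfl
    rw [h1, exponentialPDF_eq]
    by_cases hx : 0 ≤ x
    · rw [if_pos hx, ← ENNReal.ofReal_mul (by positivity)]
      simp only [Set.indicator_apply, mem_Ici, if_pos hx]
      rw [mul_assoc, ← Real.exp_add]
      ring_nf
    · rw [if_neg hx]
      simp only [Set.indicator_apply, mem_Ici, if_neg hx]
      simp
  simp_rw [hg]
  have hint : IntegrableOn (fun x => lam * rexp (-((r + lam) * x))) (Ici (0:ℝ)) := by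
    rw [integrableOn_Ici_iff_integrableOn_Ioi]
    have h := (exp_neg_integrableOn_Ioi 0 hrl).const_mul lam
    have he : (fun x : ℝ => lam * rexp (-((r + lam) * x))) = fun x => lam * rexp (-(r + lam) * x) := by
      funext x; rw [neg_mul]
    rw [he]; exact h
  have hint' : Integrable (Set.indicator (Ici (0:ℝ)) fun x => lam * rexp (-((r + lam) * x))) :=
    (integrable_indicator_iff measurableSet_Ici).mpr hint
  rw [← ofReal_integral_eq_lintegral_ofReal hint'
    (Filter.Eventually.of_forall fun x => Set.indicator_nonneg (fun y _ => by positivity) x)]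
  rw [integral_indicator measurableSet_Ici, integral_Ici_eq_integral_Ioi,
    MeasureTheory.integral_const_mul]
  have hcv : (∫ x in Ioi (0:ℝ), rexp (-((r + lam) * x)))
      = (r + lam)⁻¹ • ∫ x in Ioi ((r + lam) * 0), rexp (-x) :=
    integral_comp_mul_left_Ioi (fun y => rexp (-y)) 0 hrl
  rw [hcv, mul_zero, integral_exp_neg_Ioi, neg_zero, Real.exp_zero, smul_eq_mul, mul_one,
    ENNReal.toReal_ofReal (by positivity)]
  field_simp

/-- The payoff-sum estimate ruling out preemption at `T` in the jump example:
for events `A₁, A₂` with `P[A₁ ∩ A₂] = 0` and `A₂ ⊆ A₁ᶜ` up to null sets,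
`E[L¹_T 1_{A₁} + F_T 1_{A₁ᶜ}] + E[L²_T 1_{A₂} + F_T 1_{A₂ᶜ}]
  ≤ a - (b-c)λ/(r+λ) < a - b + 1 = L¹_0 + L²_0`. -/
theorem preemption_payoff_sum_estimate
    {Ω : Type*} {m : MeasurableSpace Ω} (μ : MeasureTheory.Measure Ω)
    [MeasureTheory.IsProbabilityMeasure μ]
    (r lam : ℝ) (hr : 0 < r) (hlam : 0 < lam)
    (a b c : ℝ) (ha : a = 2 + r / lam) (hb : b = r / (r + lam))
    (hc : c ∈ Set.Ico (1 : ℝ) (1 + b))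
    (T : Ω → ℝ) (hT : Measurable T)
    (hTexp : ∀ z : ℝ, 0 ≤ z → μ {ω | T ω ≤ z} = ENNReal.ofReal (1 - Real.exp (-lam * z)))
    (A₁ A₂ : Set Ω) (hA₁ : MeasurableSet A₁) (hA₂ : MeasurableSet A₂)
    (hdisj : μ (A₁ ∩ A₂) = 0) (hsub : μ (A₂ \ A₁ᶜ) = 0) :
    (∫ ω, ((a - Real.exp (-r * T ω) * b) * Set.indicator A₁ 1 ω
        + Real.exp (-r * T ω) * c * Set.indicator A₁ᶜ 1 ω) ∂μ)
      + (∫ ω, ((a - Real.exp (-r * T ω) * b) * Set.indicator A₂ 1 ω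
        + Real.exp (-r * T ω) * c * Set.indicator A₂ᶜ 1 ω) ∂μ)
      ≤ a - (b - c) * lam / (r + lam) ∧
    a - (b - c) * lam / (r + lam) < a - b + 1 := by
  have hrl : (0:ℝ) < r + lam := by linarith
  obtain ⟨hc1, hc2⟩ := hc
  have hbpos : 0 < b := by rw [hb]; positivity
  have hb1 : b < 1 := by rw [hb, div_lt_one hrl]; linarith
  have hba : b + c ≤ a := by
    have he : a - (1 + 2 * b) = (r ^ 2 + lam ^ 2) / (lam * (r + lam)) := by
      rw [ha, hb]; field_simp; ring
    nlinarith [div_nonneg (by positivity : (0:ℝ) ≤ r ^ 2 + lam ^ 2)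
      (by positivity : (0:ℝ) ≤ lam * (r + lam))]
  set X : Ω → ℝ := fun ω => Real.exp (-r * T ω) with hXdef
  have hXmeas : Measurable X := (measurable_const.mul hT).exp
  have hT0 : ∀ᵐ ω ∂μ, 0 ≤ T ω := by
    have h0 : μ {ω | T ω ≤ 0} = 0 := by rw [hTexp 0 le_rfl]; simp
    rw [ae_iff]
    exact measure_mono_null (fun ω hω => le_of_lt (lt_of_not_ge hω)) h0
  have hX01 : ∀ᵐ ω ∂μ, 0 ≤ X ω ∧ X ω ≤ 1 := by
    filter_upwards [hT0] with ω hω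
    refine ⟨(Real.exp_pos _).le, Real.exp_le_one_iff.mpr ?_⟩
    nlinarith
  have hind : ∀ (A : Set Ω), MeasurableSet A →
      Integrable (fun ω => (a - X ω * b) * Set.indicator A 1 ω
        + X ω * c * Set.indicator Aᶜ 1 ω) μ := by
    intro A hA
    have hm : AEStronglyMeasurable (fun ω => (a - X ω * b) * Set.indicator A 1 ω
        + X ω * c * Set.indicator Aᶜ 1 ω) μ := by
      apply Measurable.aestronglyMeasurable
      exact ((measurable_const.sub (hXmeas.mul_const b)).mul
          (measurable_one.indicator hA)).add
        ((hXmeas.mul_const c).mul (measurable_one.indicator hA.compl))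
    refine Integrable.mono' (integrable_const (|a| + |b| + |c|)) hm ?_
    filter_upwards [hX01] with ω hω
    obtain ⟨h0, h1⟩ := hω
    by_cases hmem : ω ∈ A
    · rw [Set.indicator_of_mem hmem, Set.indicator_of_notMem (by simpa using hmem)]
      rw [Pi.one_apply, mul_one, mul_zero, add_zero, Real.norm_eq_abs, abs_le]
      constructor <;>
        nlinarith [le_abs_self a, neg_abs_le a, le_abs_self b, neg_abs_le b,
          abs_nonneg a, abs_nonneg b, abs_nonneg c]
    · rw [Set.indicator_of_notMem hmem, Set.indicator_of_mem (by simpa using hmem)]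
      rw [Pi.one_apply, mul_one, mul_zero, zero_add, Real.norm_eq_abs, abs_le]
      constructor <;>
        nlinarith [le_abs_self c, neg_abs_le c, abs_nonneg a, abs_nonneg b, abs_nonneg c]
  have hXint : Integrable X μ := by
    refine Integrable.mono' (integrable_const 1) hXmeas.aestronglyMeasurable ?_
    filter_upwards [hX01] with ω hω
    rw [Real.norm_eq_abs, abs_of_nonneg hω.1]; exact hω.2
  have hRint : Integrable (fun ω => a + (c - b) * X ω) μ :=
    (integrable_const a).add (hXint.const_mul _)
  have hptwise : ∀ᵐ ω ∂μ,
      ((a - X ω * b) * Set.indicator A₁ 1 ω + X ω * c * Set.indicator A₁ᶜ 1 ω)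
      + ((a - X ω * b) * Set.indicator A₂ 1 ω + X ω * c * Set.indicator A₂ᶜ 1 ω)
      ≤ a + (c - b) * X ω := by
    have hd : ∀ᵐ ω ∂μ, ω ∉ A₁ ∩ A₂ := measure_eq_zero_iff_ae_notMem.mp hdisj
    filter_upwards [hX01, hd] with ω hω hdω
    obtain ⟨h0, h1⟩ := hω
    by_cases hm1 : ω ∈ A₁
    · have hm2 : ω ∉ A₂ := fun h => hdω ⟨hm1, h⟩
      rw [Set.indicator_of_mem hm1, Set.indicator_of_notMem (by simpa using hm1),
        Set.indicator_of_notMem hm2, Set.indicator_of_mem (by simpa using hm2)]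
      simp only [Pi.one_apply, mul_one, mul_zero, add_zero, zero_add]
      nlinarith
    · by_cases hm2 : ω ∈ A₂
      · rw [Set.indicator_of_notMem hm1, Set.indicator_of_mem (by simpa using hm1),
          Set.indicator_of_mem hm2, Set.indicator_of_notMem (by simpa using hm2)]
        simp only [Pi.one_apply, mul_one, mul_zero, add_zero, zero_add]
        nlinarith
      · rw [Set.indicator_of_notMem hm1, Set.indicator_of_mem (by simpa using hm1),
          Set.indicator_of_notMem hm2, Set.indicator_of_mem (by simpa using hm2)]
        simp only [Pi.one_apply, mul_one, mul_zero, add_zero, zero_add]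
        have hXbc : X ω * (b + c) ≤ b + c :=
          mul_le_of_le_one_left (by linarith) h1
        nlinarith
  constructor
  · rw [← integral_add (hind A₁ hA₁) (hind A₂ hA₂)]
    calc ∫ ω, (((a - X ω * b) * Set.indicator A₁ 1 ω + X ω * c * Set.indicator A₁ᶜ 1 ω)
          + ((a - X ω * b) * Set.indicator A₂ 1 ω + X ω * c * Set.indicator A₂ᶜ 1 ω)) ∂μ
        ≤ ∫ ω, (a + (c - b) * X ω) ∂μ :=
          integral_mono_ae ((hind A₁ hA₁).add (hind A₂ hA₂)) hRint hptwise
      _ = a + (c - b) * (lam / (r + lam)) := by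
          rw [integral_add (integrable_const a) (hXint.const_mul _), integral_const,
            MeasureTheory.integral_const_mul,
            exp_exp_integral μ r lam hr hlam T hT hTexp]
          simp
      _ = a - (b - c) * lam / (r + lam) := by ring
  · have hq : 0 < lam / (r + lam) := div_pos hlam hrl
    have h1b : 1 - b = lam / (r + lam) := by rw [hb]; field_simp; ring
    have hlt : (c - b) * (lam / (r + lam)) < 1 * (lam / (r + lam)) :=
      mul_lt_mul_of_pos_right (by linarith) hq
    have he2 : a - (b - c) * lam / (r + lam) = a + (c - b) * (lam / (r + lam)) := by ring
    linarith
end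

section
/- Let r, λ > 0, a = 2 + r/λ, b = r/(r+λ), c ∈ [1, 1+b), and T exponential with rate λ generating its natural filtration. Define Y_t = (a - e^{-rt}b)·1_{t<T} + e^{-rT}c·1_{t≥T}. Then Y is a strict supermartingale: for all 0 ≤ s < t, E[Y_t | 𝓕_s] < Y_s almost surely on {s < T}. -/
open MeasureTheory Real

section aux

private lemma key_alg' (r lam a b c δ x y p Es : ℝ) (hr : 0 < r) (hlam : 0 < lam)
    (ha : a * lam = 2 * lam + r) (hblam : b * (r + lam) = r)
    (hc1 : 1 ≤ c) (hc2 : c < 1 + b) (hδ0 : 0 < δ)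
    (hx0 : 0 < x) (hx1 : x < 1) (hy1 : y ≤ 1)
    (hy2 : 1 - y < r * δ) (hx6 : lam * δ * x ≤ 1 - x)
    (hEs0 : 0 < Es) (hEs1 : Es ≤ 1) (hp0 : 0 < p) :
    (a - Es * y * b) * (p * x) + c * Es * (p - p * x) < (a - Es * b) * p := by
  have hrl : 0 < r + lam := by linarith
  have hb0 : 0 < b := by nlinarith
  have hb1 : b < 1 := by nlinarith
  have hD0 : 0 < a - 1 - 2 * b := by nlinarith [sq_nonneg (lam - r), sq_nonneg lam, sq_nonneg r]
  have hcoef : a - 1 - 2 * b < a - c * Es - Es * b := by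
    have h1 : Es * c ≤ c := by nlinarith
    have h2 : Es * b ≤ b := by nlinarith
    linarith
  have hf5 : b * r < lam * (a - 1 - 2 * b) := by
    nlinarith [sq_nonneg lam, sq_nonneg r]
  have hkey : Es * b * x * (1 - y) < (a - c * Es - Es * b) * (1 - x) := by
    have c1 : Es * b * x * (1 - y) ≤ b * x * (1 - y) := by
      nlinarith [mul_nonneg (sub_nonneg.mpr hEs1)
        (mul_nonneg (mul_nonneg hb0.le hx0.le) (sub_nonneg.mpr hy1))]
    have c2 : b * x * (1 - y) < b * x * (r * δ) :=
      mul_lt_mul_of_pos_left hy2 (mul_pos hb0 hx0)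
    have c3 : b * x * (r * δ) < (a - 1 - 2 * b) * (lam * δ * x) := by
      nlinarith [mul_lt_mul_of_pos_right hf5 (mul_pos hδ0 hx0)]
    have c4 : (a - 1 - 2 * b) * (lam * δ * x) ≤ (a - 1 - 2 * b) * (1 - x) :=
      mul_le_mul_of_nonneg_left hx6 hD0.le
    have c5 : (a - 1 - 2 * b) * (1 - x) ≤ (a - c * Es - Es * b) * (1 - x) :=
      mul_le_mul_of_nonneg_right hcoef.le (by linarith)
    linarith
  have hgoal : (a - Es * y * b) * (p * x) + c * Es * (p - p * x) - (a - Es * b) * p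
      = p * (Es * b * x * (1 - y)) - p * ((a - c * Es - Es * b) * (1 - x)) := by ring
  linarith [mul_lt_mul_of_pos_left hkey hp0, hgoal]

private lemma key_ineq' (r lam b c s t : ℝ) (hr : 0 < r) (hlam : 0 < lam)
    (hb : b = r / (r + lam)) (hc1 : 1 ≤ c) (hc2 : c < 1 + b)
    (hs : 0 ≤ s) (hst : s < t) :
    ((2 + r/lam) - exp (-r * t) * b) * exp (-lam * t)
      + c * exp (-r * s) * (exp (-lam * s) - exp (-lam * t))
      < ((2 + r/lam) - exp (-r * s) * b) * exp (-lam * s) := by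
  have hrl : 0 < r + lam := by linarith
  have hδ0 : 0 < t - s := by linarith
  have hqt : exp (-lam * t) = exp (-lam * s) * exp (-lam * (t - s)) := by
    rw [← exp_add]; ring_nf
  have hEt : exp (-r * t) = exp (-r * s) * exp (-r * (t - s)) := by
    rw [← exp_add]; ring_nf
  rw [hqt, hEt]
  have h := key_alg' r lam (2 + r/lam) b c (t - s)
      (exp (-lam * (t - s))) (exp (-r * (t - s))) (exp (-lam * s)) (exp (-r * s))
      hr hlam (by field_simp) (by rw [hb]; field_simp)
      hc1 hc2 hδ0 (exp_pos _)
      (exp_lt_one_iff.mpr (by nlinarith))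
      (exp_le_one_iff.mpr (by nlinarith))
      (by have h := Real.add_one_lt_exp (x := -(r*(t-s))) (by nlinarith)
          rw [show -r * (t - s) = -(r*(t-s)) by ring]; linarith)
      (by have h1 := Real.add_one_le_exp (lam * (t-s))
          have h2 : exp (-lam * (t-s)) * exp (lam * (t-s)) = 1 := by
            rw [← exp_add]; ring_nf; exact exp_zero
          nlinarith [exp_pos (-lam * (t-s))])
      (exp_pos _) (exp_le_one_iff.mpr (by nlinarith)) (exp_pos _)
  linarith [h]

/-- The σ-algebra of sets that either contain `S` or are disjoint from `S`. -/
private def traceTrivial {Ω : Type*} (S : Set Ω) : MeasurableSpace Ω where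
  MeasurableSet' A := S ⊆ A ∨ A ∩ S = ∅
  measurableSet_empty := Or.inr (Set.empty_inter S)
  measurableSet_compl := by
    rintro A (h | h)
    · right
      rw [Set.eq_empty_iff_forall_notMem]
      rintro ω ⟨hA, hS⟩
      exact hA (h hS)
    · left
      intro ω hω
      intro hA
      exact Set.eq_empty_iff_forall_notMem.mp h ω ⟨hA, hω⟩
  measurableSet_iUnion := by
    intro f hf
    by_cases h : ∃ i, S ⊆ f i
    · obtain ⟨i, hi⟩ := h
      exact Or.inl (hi.trans (Set.subset_iUnion f i))
    · right
      push_neg at h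
      rw [Set.eq_empty_iff_forall_notMem]
      rintro ω ⟨hA, hS⟩
      obtain ⟨i, hi⟩ := Set.mem_iUnion.mp hA
      rcases hf i with h' | h'
      · exact h i h'
      · exact Set.eq_empty_iff_forall_notMem.mp h' ω ⟨hi, hS⟩

end aux

/-- In the jump example, the waiting payoff
`Y_t = (a - e^{-rt}b) 1_{t<T} + e^{-rT}c 1_{t≥T}` is a strict supermartingale:
for `0 ≤ s < t`, `E[Y_t | 𝓕_s] < Y_s` a.s. on `{s < T}`. -/
theorem waiting_payoff_strict_supermartingale
    {Ω : Type*} {m : MeasurableSpace Ω} (μ : MeasureTheory.Measure Ω)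
    [MeasureTheory.IsProbabilityMeasure μ]
    (r lam : ℝ) (hr : 0 < r) (hlam : 0 < lam)
    (a b c : ℝ) (ha : a = 2 + r / lam) (hb : b = r / (r + lam))
    (hc : c ∈ Set.Ico (1 : ℝ) (1 + b))
    (T : Ω → ℝ) (hT : Measurable T)
    (hTexp : ∀ z : ℝ, 0 ≤ z → μ {ω | T ω ≤ z} = ENNReal.ofReal (1 - Real.exp (-lam * z)))
    (u : ℝ → Ω → ℝ) (hu_def : ∀ s ω, u s ω = if T ω ≤ s then 1 else 0)
    (hu : ∀ s, MeasureTheory.StronglyMeasurable (u s))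
    (Y : ℝ → Ω → ℝ)
    (hY : ∀ t ω, Y t ω =
      if t < T ω then a - Real.exp (-r * t) * b else Real.exp (-r * T ω) * c) :
    ∀ s t : ℝ, 0 ≤ s → s < t →
      ∀ᵐ ω ∂μ, s < T ω →
        (μ[Y t | (MeasureTheory.Filtration.natural u hu) s]) ω < Y s ω := by
  intro s t hs hst
  obtain ⟨hc1, hc2⟩ := hc
  have hb0 : 0 < b := by rw [hb]; positivity
  have ht0 : 0 ≤ t := le_of_lt (lt_of_le_of_lt hs hst)
  -- survival probabilities
  have h_surv : ∀ z : ℝ, 0 ≤ z → μ {ω | z < T ω} = ENNReal.ofReal (Real.exp (-lam * z)) := by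
    intro z hz
    have hmz : MeasurableSet {ω | T ω ≤ z} := hT measurableSet_Iic
    have hcompl : {ω | z < T ω} = {ω | T ω ≤ z}ᶜ := by
      ext ω; simp [not_le]
    have he1 : Real.exp (-lam * z) ≤ 1 :=
      exp_le_one_iff.mpr (by nlinarith)
    rw [hcompl, measure_compl hmz (measure_ne_top μ _), hTexp z hz, measure_univ]
    rw [show (1 : ENNReal) = ENNReal.ofReal 1 from ENNReal.ofReal_one.symm,
      ← ENNReal.ofReal_sub 1 (by linarith [exp_pos (-lam * z)])]
    norm_num
  have hF_le : (MeasureTheory.Filtration.natural u hu) s ≤ m :=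
    (MeasureTheory.Filtration.natural u hu).le s
  set S := {ω | s < T ω} with hSdef
  have hSm : MeasurableSet S := measurableSet_lt measurable_const hT
  -- S is ((MeasureTheory.Filtration.natural u hu) s)-measurable
  have hSu : S = u s ⁻¹' {0} := by
    ext ω
    simp only [Set.mem_preimage, Set.mem_singleton_iff, hu_def, hSdef, Set.mem_setOf_eq]
    by_cases h : T ω ≤ s
    · simp [h, not_lt.mpr h]
    · simp [h, not_le.mp h]
  have hcomap_le : MeasurableSpace.comap (u s) inferInstance ≤ ((MeasureTheory.Filtration.natural u hu) s) := by
    exact le_iSup₂ (f := fun j (_ : j ≤ s) => MeasurableSpace.comap (u j) inferInstance) s le_rfl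
  have hS_F : MeasurableSet[((MeasureTheory.Filtration.natural u hu) s)] S :=
    hcomap_le _ ⟨{0}, measurableSet_singleton 0, hSu.symm⟩
  -- trace of ((MeasureTheory.Filtration.natural u hu) s) on S is trivial
  have htrace : ∀ A : Set Ω, MeasurableSet[((MeasureTheory.Filtration.natural u hu) s)] A → S ⊆ A ∨ A ∩ S = ∅ := by
    have hle : (MeasureTheory.Filtration.natural u hu) s ≤ traceTrivial S := by
      refine iSup₂_le ?_
      rintro j hj A ⟨B, _, rfl⟩
      by_cases h0 : (0 : ℝ) ∈ B
      · left
        intro ω hω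
        have : u j ω = 0 := by
          rw [hu_def]
          exact if_neg (by simp only [hSdef, Set.mem_setOf_eq] at hω; push_neg; linarith)
        simpa [Set.mem_preimage, this]
      · right
        rw [Set.eq_empty_iff_forall_notMem]
        rintro ω ⟨hA, hω⟩
        have : u j ω = 0 := by
          rw [hu_def]
          exact if_neg (by simp only [hSdef, Set.mem_setOf_eq] at hω; push_neg; linarith)
        rw [Set.mem_preimage, this] at hA
        exact h0 hA
    exact fun A hA => hle A hA
  -- the conditional expectation is constant on S
  have hg_sm : StronglyMeasurable[((MeasureTheory.Filtration.natural u hu) s)] (μ[Y t | ((MeasureTheory.Filtration.natural u hu) s)]) := stronglyMeasurable_condExp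
  have hg_const : ∀ ω₁ ∈ S, ∀ ω₂ ∈ S, (μ[Y t | ((MeasureTheory.Filtration.natural u hu) s)]) ω₂ = (μ[Y t | ((MeasureTheory.Filtration.natural u hu) s)]) ω₁ := by
    intro ω₁ h1 ω₂ h2
    have hA : MeasurableSet[((MeasureTheory.Filtration.natural u hu) s)] ((μ[Y t | ((MeasureTheory.Filtration.natural u hu) s)]) ⁻¹' {(μ[Y t | ((MeasureTheory.Filtration.natural u hu) s)]) ω₁}) :=
      hg_sm.measurable (measurableSet_singleton _)
    rcases htrace _ hA with h | h
    · exact h h2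
    · exact absurd (Set.eq_empty_iff_forall_notMem.mp h ω₁ ⟨rfl, h1⟩) (fun h => h)
  -- S is nonempty
  have hμS : μ S = ENNReal.ofReal (Real.exp (-lam * s)) := h_surv s hs
  have hSne : S.Nonempty := by
    rw [Set.nonempty_iff_ne_empty]
    intro h
    rw [h, measure_empty] at hμS
    exact absurd hμS.symm (ne_of_gt (ENNReal.ofReal_pos.mpr (exp_pos _)))
  obtain ⟨ω₀, hω₀⟩ := hSne
  -- a.e. T is positive
  have hT0ae : ∀ᵐ ω ∂μ, 0 < T ω := by
    rw [ae_iff]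
    have : {ω | ¬ 0 < T ω} = {ω | T ω ≤ 0} := by ext ω; simp [not_lt]
    rw [this, hTexp 0 le_rfl]
    simp
  -- integrability
  have hYt_eq : Y t = fun ω => if t < T ω then a - Real.exp (-r * t) * b
      else Real.exp (-r * T ω) * c := funext fun ω => hY t ω
  have hYt_meas : Measurable (Y t) := by
    rw [hYt_eq]
    exact Measurable.ite (measurableSet_lt measurable_const hT) measurable_const
      ((Real.measurable_exp.comp (hT.const_mul (-r))).mul_const c)
  have hbound : ∀ ω, 0 < T ω → ‖Y t ω‖ ≤ |a| + b + c := by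
    intro ω hω
    rw [hY, Real.norm_eq_abs]
    split_ifs with h
    · have he1 : Real.exp (-r * t) ≤ 1 := exp_le_one_iff.mpr (by nlinarith)
      have he0 : 0 < Real.exp (-r * t) := exp_pos _
      rw [abs_le]
      constructor <;> nlinarith [le_abs_self a, neg_abs_le a]
    · have he1 : Real.exp (-r * T ω) ≤ 1 := exp_le_one_iff.mpr (by nlinarith)
      have he0 : 0 < Real.exp (-r * T ω) := exp_pos _
      rw [abs_le]
      constructor <;> nlinarith [abs_nonneg a]
  have hYt_int : Integrable (Y t) μ := by
    refine Integrable.mono' (integrable_const (|a| + b + c))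
      hYt_meas.aestronglyMeasurable ?_
    filter_upwards [hT0ae] with ω hω using hbound ω hω
  set Z : Ω → ℝ := fun ω => if t < T ω then a - Real.exp (-r * t) * b
      else c * Real.exp (-r * s) with hZdef
  have hZ_meas : Measurable Z := by
    exact Measurable.ite (measurableSet_lt measurable_const hT) measurable_const
      measurable_const
  have hZ_int : Integrable Z μ := by
    refine Integrable.mono' (integrable_const (|a| + b + c))
      hZ_meas.aestronglyMeasurable (Filter.Eventually.of_forall fun ω => ?_)
    rw [hZdef]
    simp only
    split_ifs with h
    · have he1 : Real.exp (-r * t) ≤ 1 := exp_le_one_iff.mpr (by nlinarith)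
      have he0 : 0 < Real.exp (-r * t) := exp_pos _
      rw [Real.norm_eq_abs, abs_le]
      constructor <;> nlinarith [le_abs_self a, neg_abs_le a]
    · have he1 : Real.exp (-r * s) ≤ 1 := exp_le_one_iff.mpr (by nlinarith)
      have he0 : 0 < Real.exp (-r * s) := exp_pos _
      rw [Real.norm_eq_abs, abs_le]
      constructor <;> nlinarith [abs_nonneg a]
  -- the set-integral identity from conditional expectation
  have h_int_eq : ∫ ω in S, (μ[Y t | ((MeasureTheory.Filtration.natural u hu) s)]) ω ∂μ = ∫ ω in S, Y t ω ∂μ :=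
    setIntegral_condExp hF_le hYt_int hS_F
  -- LHS equals (μ S).toReal * c₀
  have h_lhs : ∫ ω in S, (μ[Y t | ((MeasureTheory.Filtration.natural u hu) s)]) ω ∂μ = Real.exp (-lam * s) * (μ[Y t | ((MeasureTheory.Filtration.natural u hu) s)]) ω₀ := by
    rw [setIntegral_congr_fun hSm (fun ω hω => hg_const ω₀ hω₀ ω hω),
      setIntegral_const, measureReal_def, hμS, ENNReal.toReal_ofReal (exp_pos _).le, smul_eq_mul]
  -- bound the RHS by the integral of Z
  have h_mono : ∫ ω in S, Y t ω ∂μ ≤ ∫ ω in S, Z ω ∂μ := by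
    refine setIntegral_mono_on hYt_int.integrableOn hZ_int.integrableOn hSm ?_
    intro ω hω
    have hωS : s < T ω := hω
    rw [hY, hZdef]
    simp only
    split_ifs with h
    · exact le_rfl
    · have he : Real.exp (-r * T ω) ≤ Real.exp (-r * s) :=
        Real.exp_le_exp.mpr (by nlinarith)
      nlinarith [exp_pos (-r * s)]
  -- compute the integral of Z over S
  set P := {ω | t < T ω} with hPdef
  have hPm : MeasurableSet P := measurableSet_lt measurable_const hT
  have hPsubS : P ⊆ S := fun ω hω => lt_trans hst hω
  have hμP : μ P = ENNReal.ofReal (Real.exp (-lam * t)) := h_surv t ht0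
  have hμSP : μ (S \ P) = ENNReal.ofReal (Real.exp (-lam * s) - Real.exp (-lam * t)) := by
    rw [measure_diff hPsubS hPm.nullMeasurableSet (measure_ne_top μ _), hμS, hμP,
      ← ENNReal.ofReal_sub _ (exp_pos _).le]
  have h_union : P ∪ (S \ P) = S := Set.union_diff_cancel hPsubS
  have hZ_split : ∫ ω in S, Z ω ∂μ
      = (a - Real.exp (-r * t) * b) * Real.exp (-lam * t)
        + c * Real.exp (-r * s) * (Real.exp (-lam * s) - Real.exp (-lam * t)) := by
    rw [← h_union, setIntegral_union Set.disjoint_sdiff_right (hSm.diff hPm)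
      hZ_int.integrableOn hZ_int.integrableOn]
    have heq1 : Set.EqOn Z (fun _ => a - Real.exp (-r * t) * b) P :=
      fun ω hω => if_pos hω
    have heq2 : Set.EqOn Z (fun _ => c * Real.exp (-r * s)) (S \ P) :=
      fun ω hω => if_neg hω.2
    have h1 : ∫ ω in P, Z ω ∂μ = (μ P).toReal • (a - Real.exp (-r * t) * b) := by
      rw [setIntegral_congr_fun hPm heq1, setIntegral_const, measureReal_def]
    have h2 : ∫ ω in S \ P, Z ω ∂μ = (μ (S \ P)).toReal • (c * Real.exp (-r * s)) := by
      rw [setIntegral_congr_fun (hSm.diff hPm) heq2, setIntegral_const, measureReal_def]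
    have hexp_le : Real.exp (-lam * t) ≤ Real.exp (-lam * s) :=
      Real.exp_le_exp.mpr (by nlinarith)
    rw [h1, h2, hμP, hμSP, ENNReal.toReal_ofReal (exp_pos _).le,
      ENNReal.toReal_ofReal (show (0:ℝ) ≤ Real.exp (-lam * s) - Real.exp (-lam * t) by linarith)]
    simp only [smul_eq_mul]
    ring
  -- the strict inequality on constants
  have hkey := key_ineq' r lam b c s t hr hlam hb hc1 hc2 hs hst
  rw [← ha] at hkey
  have hc0 : (μ[Y t | ((MeasureTheory.Filtration.natural u hu) s)]) ω₀ < a - Real.exp (-r * s) * b := by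
    have hchain : Real.exp (-lam * s) * (μ[Y t | ((MeasureTheory.Filtration.natural u hu) s)]) ω₀
        ≤ (a - Real.exp (-r * t) * b) * Real.exp (-lam * t)
          + c * Real.exp (-r * s) * (Real.exp (-lam * s) - Real.exp (-lam * t)) := by
      rw [← h_lhs, h_int_eq, ← hZ_split]; exact h_mono
    have hlt : Real.exp (-lam * s) * (μ[Y t | ((MeasureTheory.Filtration.natural u hu) s)]) ω₀
        < (a - Real.exp (-r * s) * b) * Real.exp (-lam * s) := lt_of_le_of_lt hchain hkey
    have hp0 : 0 < Real.exp (-lam * s) := exp_pos _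
    nlinarith [hlt, hp0]
  -- conclude pointwise on S
  refine Filter.Eventually.of_forall fun ω hω => ?_
  have hgω : (μ[Y t | ((MeasureTheory.Filtration.natural u hu) s)]) ω = (μ[Y t | ((MeasureTheory.Filtration.natural u hu) s)]) ω₀ := hg_const ω₀ hω₀ ω hω
  rw [hY s ω, if_pos hω]
  rw [hgω]
  exact hc0
end
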